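/- arXiv:0806.0274 — 2 statements merged into one kernel-verified Lean document; each statement's English description precedes it below -/
import Mathlib

section
/- For 0 ≤ d ≤ n, there is a unique ring homomorphism f : R_{n+1,d+1} → R_{n,d} with f(x_i) = x_i for all 1 ≤ i ≤ n−d; f is surjective and its kernel is the principal ideal of R_{n+1,d+1} generated by the class of s_{d+1}. In particular, R_{n,d} ≅ R_{n+1,d+1}/(s_{d+1}), and the polynomial s_{n+1} lies in the ideal (s_{d+1},…,s_n) of ℤ[x_1,…,x_{n−d}]. -/
open MvPolynomial

/-- The power series `1 + x₁ t + x₂ t² + ⋯ + x_m t^m` in `ℤ[x₁,…,x_m][[t]]`,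
where `x_{i+1}` is the variable `X i` for `i : Fin m`. -/
noncomputable def genSeries (m : ℕ) : PowerSeries (MvPolynomial (Fin m) ℤ) :=
  1 + ∑ i : Fin m,
    PowerSeries.monomial ((i : ℕ) + 1) (X i)

/-- The polynomials `s_k ∈ ℤ[x₁,…,x_m]` defined by
`(1 + x₁ t + ⋯ + x_m t^m)⁻¹ = 1 + ∑_{k ≥ 1} s_k t^k`. -/
noncomputable def sPoly (m : ℕ) (k : ℕ) : MvPolynomial (Fin m) ℤ :=
  PowerSeries.coeff k (PowerSeries.invOfUnit (genSeries m) 1)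

/-- The quotient ring `ℤ[x₁,…,x_m]/(s_a,…,s_b)`.  Thus `R_{n,d} = RK (n-d) (d+1) n`,
`R_{n+1,d+1} = RK (n-d) (d+2) (n+1)` and `R_{n,d+1} = RK (n-d-1) (d+2) n`. -/
abbrev RK (m a b : ℕ) : Type :=
  MvPolynomial (Fin m) ℤ ⧸ Ideal.span (sPoly m '' Set.Icc a b)

/-- The quotient map `ℤ[x₁,…,x_m] → ℤ[x₁,…,x_m]/(s_a,…,s_b)`. -/
noncomputable def qk (m a b : ℕ) : MvPolynomial (Fin m) ℤ →+* RK m a b :=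
  Ideal.Quotient.mk _

/-- `xv m t` is the variable `x_t` of `ℤ[x₁,…,x_m]`, with the conventions
`x₀ = 1` and `x_t = 0` for `t < 0` or `t > m`. -/
noncomputable def xv (m : ℕ) (t : ℤ) : MvPolynomial (Fin m) ℤ :=
  if t = 0 then 1
  else if h : 1 ≤ t ∧ t ≤ (m : ℤ) then X (⟨t.toNat - 1, by omega⟩ : Fin m) else 0

/-- The Schur polynomial `Δ_a ∈ ℤ[x₁,…,x_m]` attached to a tuple
`a = (a₁,…,a_d)`: the `d × d` determinant whose `(i,j)` entry is
`x_{a_i + j - i}`, with the conventions `x₀ = 1` and `x_t = 0` for `t < 0`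
or `t > m`. -/
noncomputable def schur (m : ℕ) {d : ℕ} (a : Fin d → ℕ) : MvPolynomial (Fin m) ℤ :=
  Matrix.det (Matrix.of fun i j : Fin d => xv m ((a i : ℤ) + (j : ℤ) - (i : ℤ)))

open Finset in
lemma sPoly_rec (m k : ℕ) (hk : k ≠ 0) :
    sPoly m k = - ∑ i : Fin m,
      (if (i : ℕ) + 1 ≤ k then X i * sPoly m (k - ((i : ℕ) + 1)) else 0) := by
  have hc : PowerSeries.constantCoeff (genSeries m) = 1 := by
    simp only [genSeries, map_add, map_sum, map_one,
      ← PowerSeries.coeff_zero_eq_constantCoeff_apply, PowerSeries.coeff_monomial]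
    simp
  have h1 : genSeries m * PowerSeries.invOfUnit (genSeries m) 1 = 1 :=
    PowerSeries.mul_invOfUnit _ 1 (by simpa using hc)
  have h2 := congrArg (PowerSeries.coeff k) h1
  rw [PowerSeries.coeff_mul, PowerSeries.coeff_one, if_neg hk,
    Finset.Nat.sum_antidiagonal_eq_sum_range_succ_mk] at h2
  simp only [genSeries, map_add, map_sum, PowerSeries.coeff_one,
    PowerSeries.coeff_monomial, add_mul, Finset.sum_add_distrib,
    Finset.sum_mul, ite_mul, one_mul, zero_mul] at h2
  rw [Finset.sum_ite_eq' (range (k+1)) 0, Finset.sum_comm] at h2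
  simp only [Finset.sum_ite_eq' (range (k+1)), mem_range, Nat.lt_succ_iff,
    Nat.zero_le, if_true, Nat.sub_zero] at h2
  simp only [sPoly, genSeries]
  exact eq_neg_of_add_eq_zero_left h2


lemma key_mem (n d : ℕ) (hd : d ≤ n) :
    sPoly (n - d) (n + 1) ∈ Ideal.span (sPoly (n - d) '' Set.Icc (d + 1) n) := by
  set m := n - d with hm
  rw [sPoly_rec m (n + 1) (by omega)]
  refine neg_mem (Ideal.sum_mem _ fun i _ => ?_)
  have hi : (i : ℕ) < m := i.isLt
  rw [if_pos (by omega)]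
  exact Ideal.mul_mem_left _ _ (Ideal.subset_span
    ⟨n + 1 - ((i : ℕ) + 1), by constructor <;> omega, rfl⟩)

lemma hIJ (n d : ℕ) (hd : d ≤ n) :
    Ideal.span (sPoly (n - d) '' Set.Icc (d + 2) (n + 1)) ≤
      Ideal.span (sPoly (n - d) '' Set.Icc (d + 1) n) := by
  rw [Ideal.span_le]
  rintro _ ⟨k, hk, rfl⟩
  obtain ⟨hk1, hk2⟩ := hk
  rcases eq_or_lt_of_le hk2 with h | h
  · rw [h]; exact key_mem n d hd
  · exact Ideal.subset_span ⟨k, ⟨by omega, by omega⟩, rfl⟩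


/-- There is a unique ring homomorphism `f : R_{n+1,d+1} → R_{n,d}` with
`f(xᵢ) = xᵢ` for all `1 ≤ i ≤ n-d`; it is surjective and its kernel is the
principal ideal generated by the class of `s_{d+1}`; moreover `s_{n+1}` lies
in the ideal `(s_{d+1},…,s_n)` of `ℤ[x₁,…,x_{n-d}]`. -/
theorem stmt3 (n d : ℕ) (hd : d ≤ n) :
    (∃! f : RK (n - d) (d + 2) (n + 1) →+* RK (n - d) (d + 1) n,
        ∀ i : Fin (n - d),
          f (qk (n - d) (d + 2) (n + 1) (X i)) = qk (n - d) (d + 1) n (X i)) ∧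
    (∀ f : RK (n - d) (d + 2) (n + 1) →+* RK (n - d) (d + 1) n,
        (∀ i : Fin (n - d),
            f (qk (n - d) (d + 2) (n + 1) (X i)) = qk (n - d) (d + 1) n (X i)) →
        Function.Surjective f ∧
        RingHom.ker f =
          Ideal.span {qk (n - d) (d + 2) (n + 1) (sPoly (n - d) (d + 1))}) ∧
    sPoly (n - d) (n + 1) ∈ Ideal.span (sPoly (n - d) '' Set.Icc (d + 1) n) := by
  set m := n - d with hm
  set I := Ideal.span (sPoly m '' Set.Icc (d + 2) (n + 1)) with hI
  set J := Ideal.span (sPoly m '' Set.Icc (d + 1) n) with hJ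
  have hle : I ≤ J := hIJ n d hd
  set f₀ : RK m (d + 2) (n + 1) →+* RK m (d + 1) n := Ideal.Quotient.factor hle with hf₀
  have hf₀X : ∀ i : Fin m, f₀ (qk m (d + 2) (n + 1) (X i)) = qk m (d + 1) n (X i) :=
    fun i => Ideal.Quotient.factor_mk hle _
  -- any f with the property agrees with qk after composition
  have hcomp : ∀ f : RK m (d + 2) (n + 1) →+* RK m (d + 1) n,
      (∀ i : Fin m, f (qk m (d + 2) (n + 1) (X i)) = qk m (d + 1) n (X i)) →
      f.comp (qk m (d + 2) (n + 1)) = qk m (d + 1) n := by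
    intro f hf
    apply MvPolynomial.ringHom_ext
    · intro r
      rw [RingHom.comp_apply, eq_intCast (C : ℤ →+* MvPolynomial (Fin m) ℤ) r,
        map_intCast, map_intCast]
      exact (map_intCast (qk m (d + 1) n) r).symm
    · intro i
      exact hf i
  have huniq : ∀ f : RK m (d + 2) (n + 1) →+* RK m (d + 1) n,
      (∀ i : Fin m, f (qk m (d + 2) (n + 1) (X i)) = qk m (d + 1) n (X i)) → f = f₀ := by
    intro f hf
    have h1 := hcomp f hf
    have h2 := hcomp f₀ hf₀X
    apply RingHom.ext
    intro x
    obtain ⟨p, rfl⟩ := Ideal.Quotient.mk_surjective x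
    exact (RingHom.congr_fun h1 p).trans (RingHom.congr_fun h2 p).symm
  refine ⟨⟨f₀, hf₀X, huniq⟩, ?_, key_mem n d hd⟩
  intro f hf
  have h1 := hcomp f hf
  constructor
  · intro y
    obtain ⟨p, rfl⟩ := Ideal.Quotient.mk_surjective y
    exact ⟨qk m (d + 2) (n + 1) p, RingHom.congr_fun h1 p⟩
  · apply le_antisymm
    · intro x hx
      obtain ⟨p, rfl⟩ := Ideal.Quotient.mk_surjective x
      have hpJ : p ∈ J := by
        rw [← Ideal.Quotient.eq_zero_iff_mem]
        exact (RingHom.congr_fun h1 p).symm.trans hx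
      have hK : J ≤ (Ideal.span {qk m (d + 2) (n + 1) (sPoly m (d + 1))}).comap
          (qk m (d + 2) (n + 1)) := by
        rw [hJ, Ideal.span_le]
        rintro _ ⟨k, ⟨hk1, hk2⟩, rfl⟩
        rcases eq_or_lt_of_le hk1 with h | h
        · rw [← h]
          exact Ideal.mem_span_singleton_self _
        · have h0 : sPoly m k ∈ I := Ideal.subset_span ⟨k, ⟨by omega, by omega⟩, rfl⟩
          have : qk m (d + 2) (n + 1) (sPoly m k) = 0 :=
            Ideal.Quotient.eq_zero_iff_mem.mpr h0
          simp only [SetLike.mem_coe, Ideal.mem_comap, this]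
          exact zero_mem _
      exact hK hpJ
    · rw [Ideal.span_le, Set.singleton_subset_iff]
      have hsd : sPoly m (d + 1) ∈ J := by
        rcases Nat.lt_or_ge d n with h | h
        · exact Ideal.subset_span ⟨d + 1, ⟨le_rfl, by omega⟩, rfl⟩
        · rw [show d + 1 = n + 1 from by omega]
          exact key_mem n d hd
      show f (qk m (d + 2) (n + 1) (sPoly m (d + 1))) = 0
      have h2 := RingHom.congr_fun h1 (sPoly m (d + 1))
      rw [RingHom.comp_apply] at h2
      rw [h2]
      exact Ideal.Quotient.eq_zero_iff_mem.mpr hsd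
end

section
/- For 0 ≤ d ≤ n, the ring R_{n,d} = ℤ[x_1,…,x_{n−d}]/(s_{d+1},…,s_n) is a free ℤ-module of rank (n choose d). -/
open MvPolynomial

namespace Stmt6Aux
open Finset PowerSeries

lemma geom_inv {S : Type*} [CommRing S] (a : S) :
    ((1 : S⟦X⟧) + PowerSeries.C a * PowerSeries.X) * PowerSeries.mk (fun j => (-a)^j) = 1 := by
  have h : ((1 : S⟦X⟧) + PowerSeries.C a * PowerSeries.X) * PowerSeries.mk (fun j => (-a)^j)
      = PowerSeries.mk (fun j => (-a)^j)
        + PowerSeries.C a * (PowerSeries.X * PowerSeries.mk (fun j => (-a)^j)) := by ring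
  rw [h]
  ext k
  rcases k with _ | k
  · simp
  · simp [PowerSeries.coeff_succ_X_mul, pow_succ, PowerSeries.coeff_one]
    ring

noncomputable def xpoly (m : ℕ) (t : ℕ) : MvPolynomial (Fin m) ℤ :=
  if h0 : t = 0 then 1 else if h : t ≤ m then X ⟨t-1, by omega⟩ else 0

lemma xpoly_zero (m : ℕ) : xpoly m 0 = 1 := by simp [xpoly]

lemma xpoly_of_le (m t : ℕ) (h1 : 1 ≤ t) (h2 : t ≤ m) :
    xpoly m t = X ⟨t-1, by omega⟩ := by rw [xpoly, dif_neg (by omega), dif_pos h2]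

lemma xpoly_of_gt (m t : ℕ) (h : m < t) : xpoly m t = 0 := by
  rw [xpoly, dif_neg (by omega), dif_neg (by omega)]

lemma coeff_genSeries (m k : ℕ) :
    PowerSeries.coeff k (genSeries m) = xpoly m k := by
  unfold genSeries
  rw [map_add, map_sum]
  simp only [PowerSeries.coeff_one, PowerSeries.coeff_monomial]
  rcases Nat.eq_zero_or_pos k with rfl | hk
  · simp [xpoly]
  · rw [if_neg (by omega)]
    by_cases hkm : k ≤ m
    · rw [Finset.sum_eq_single (⟨k-1, by omega⟩ : Fin m)]
      · rw [if_pos (by simp; omega), xpoly, dif_neg (by omega), dif_pos hkm, zero_add]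
      · intro i _ hi
        rw [if_neg]
        intro hik
        apply hi
        have : i.val = k - 1 := by omega
        exact Fin.ext this
      · intro h; exact absurd (Finset.mem_univ _) h
    · rw [Finset.sum_eq_zero, xpoly, dif_neg (by omega), dif_neg hkm, zero_add]
      intro i _
      rw [if_neg]
      have := i.isLt
      omega

lemma constantCoeff_genSeries (m : ℕ) :
    PowerSeries.constantCoeff (genSeries m) = 1 := by
  rw [← PowerSeries.coeff_zero_eq_constantCoeff_apply, coeff_genSeries, xpoly_zero]

lemma genSeries_mul_inv (m : ℕ) :
    genSeries m * PowerSeries.invOfUnit (genSeries m) 1 = 1 :=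
  PowerSeries.mul_invOfUnit _ _ (by rw [constantCoeff_genSeries]; rfl)

lemma sPoly_zero (m : ℕ) : sPoly m 0 = 1 := by
  unfold sPoly
  rw [PowerSeries.coeff_zero_eq_constantCoeff_apply, PowerSeries.constantCoeff_invOfUnit]
  rfl

lemma coeff_map_genSeries {S : Type*} [CommRing S] {m : ℕ}
    (f : MvPolynomial (Fin m) ℤ →+* S) (k : ℕ) :
    PowerSeries.coeff k (PowerSeries.map f (genSeries m)) = f (xpoly m k) := by
  rw [PowerSeries.coeff_map, coeff_genSeries]

lemma map_gen_mul_map_inv {S : Type*} [CommRing S] {m : ℕ}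
    (f : MvPolynomial (Fin m) ℤ →+* S) :
    PowerSeries.map f (genSeries m)
      * PowerSeries.map f (PowerSeries.invOfUnit (genSeries m) 1) = 1 := by
  rw [← map_mul, genSeries_mul_inv, map_one]

/-- constant coefficient of `sPoly` vanishes in positive degree -/
lemma constantCoeff_sPoly (m k : ℕ) (hk : k ≠ 0) :
    MvPolynomial.constantCoeff (sPoly m k) = 0 := by
  have h1 : PowerSeries.map (MvPolynomial.constantCoeff (σ := Fin m) (R := ℤ)) (genSeries m) = 1 := by
    ext j
    rw [coeff_map_genSeries, PowerSeries.coeff_one]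
    rcases Nat.eq_zero_or_pos j with rfl | hj
    · simp [xpoly_zero]
    · rw [if_neg (by omega), xpoly]
      rw [dif_neg (by omega)]
      by_cases hjm : j ≤ m
      · rw [dif_pos hjm]; simp
      · rw [dif_neg hjm]; simp
  have h2 := map_gen_mul_map_inv (m := m) (MvPolynomial.constantCoeff)
  rw [h1, one_mul] at h2
  have : MvPolynomial.constantCoeff (sPoly m k)
      = PowerSeries.coeff k (1 : PowerSeries ℤ) := by
    rw [← h2]
    unfold sPoly
    rw [PowerSeries.coeff_map]
  rw [this, PowerSeries.coeff_one, if_neg hk]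

lemma monic_aux {S : Type*} [CommRing S] [Nontrivial S] (c : ℕ → S) (hc : c 0 = 1) (N : ℕ)
    (hN : 0 < N) :
    (∑ i ∈ Finset.range (N+1), Polynomial.C (c i) * Polynomial.X ^ (N-i)).Monic ∧
    (∑ i ∈ Finset.range (N+1), Polynomial.C (c i) * Polynomial.X ^ (N-i)).natDegree = N := by
  have hsplit : (∑ i ∈ Finset.range (N+1), Polynomial.C (c i) * Polynomial.X ^ (N-i))
      = Polynomial.X ^ N + ∑ i ∈ Finset.range N, Polynomial.C (c (i+1)) * Polynomial.X ^ (N-(i+1)) := by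
    rw [Finset.sum_range_succ' (fun i => Polynomial.C (c i) * Polynomial.X ^ (N-i)) N]
    rw [Nat.sub_zero, hc, map_one, one_mul, add_comm]
  have hdeg : (∑ i ∈ Finset.range N, Polynomial.C (c (i+1)) * Polynomial.X ^ (N-(i+1))).degree < (N : WithBot ℕ) := by
    apply lt_of_le_of_lt (Polynomial.degree_sum_le _ _)
    rw [Finset.sup_lt_iff (by exact_mod_cast WithBot.bot_lt_coe N)]
    intro i hi
    apply lt_of_le_of_lt (Polynomial.degree_C_mul_X_pow_le _ _)
    have hiN : i + 1 ≥ 1 := by omega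
    exact_mod_cast Nat.lt_of_le_of_lt (Nat.sub_le_sub_left hiN N) (by omega)
  constructor
  · rw [hsplit]; exact Polynomial.monic_X_pow_add hdeg
  · rw [hsplit]
    have h1 : (Polynomial.X ^ N + ∑ i ∈ Finset.range N, Polynomial.C (c (i+1)) * Polynomial.X ^ (N-(i+1))).degree = (N : WithBot ℕ) := by
      rw [Polynomial.degree_add_eq_left_of_degree_lt, Polynomial.degree_X_pow]
      rwa [Polynomial.degree_X_pow]
    exact Polynomial.natDegree_eq_of_degree_eq_some h1

lemma coeff_zero_one_add_CX_mul {S : Type*} [CommRing S] (a : S) (f : S⟦X⟧) :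
    PowerSeries.coeff 0 ((1 + PowerSeries.C a * PowerSeries.X) * f)
      = PowerSeries.coeff 0 f := by
  have h : (1 + PowerSeries.C a * PowerSeries.X) * f
      = f + PowerSeries.C a * (PowerSeries.X * f) := by ring
  rw [h, map_add, PowerSeries.coeff_C_mul, PowerSeries.coeff_zero_X_mul, mul_zero, add_zero]

lemma coeff_succ_one_add_CX_mul {S : Type*} [CommRing S] (a : S) (f : S⟦X⟧) (k : ℕ) :
    PowerSeries.coeff (k+1) ((1 + PowerSeries.C a * PowerSeries.X) * f)
      = PowerSeries.coeff (k+1) f + a * PowerSeries.coeff k f := by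
  have h : (1 + PowerSeries.C a * PowerSeries.X) * f
      = f + PowerSeries.C a * (PowerSeries.X * f) := by ring
  rw [h, map_add, PowerSeries.coeff_C_mul, PowerSeries.coeff_succ_X_mul]

section Step
variable (m d : ℕ)

abbrev Rstep := RK (m+1) (d+1) (d+m+1)
abbrev Rstep' := RK m (d+2) (d+m+1)

noncomputable def mkA : MvPolynomial (Fin (m+1)) ℤ →+* Rstep m d := Ideal.Quotient.mk _
noncomputable def mkA' : MvPolynomial (Fin m) ℤ →+* Rstep' m d := Ideal.Quotient.mk _

lemma mkA_sPoly (k : ℕ) (h1 : d+1 ≤ k) (h2 : k ≤ d+m+1) : mkA m d (sPoly (m+1) k) = 0 := by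
  rw [mkA, Ideal.Quotient.eq_zero_iff_mem]
  exact Ideal.subset_span ⟨k, ⟨h1, h2⟩, rfl⟩

lemma mkA'_sPoly (k : ℕ) (h1 : d+2 ≤ k) (h2 : k ≤ d+m+1) : mkA' m d (sPoly m k) = 0 := by
  rw [mkA', Ideal.Quotient.eq_zero_iff_mem]
  exact Ideal.subset_span ⟨k, ⟨h1, h2⟩, rfl⟩

/-- the augmentation kills the ideal, so the quotients are nontrivial. -/
lemma spanKer (M a b : ℕ) (ha : 1 ≤ a) :
    ∀ x ∈ Ideal.span (sPoly M '' Set.Icc a b), MvPolynomial.constantCoeff x = 0 := by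
  intro x hx
  have hle : Ideal.span (sPoly M '' Set.Icc a b)
      ≤ RingHom.ker (MvPolynomial.constantCoeff (σ := Fin M) (R := ℤ)) := by
    rw [Ideal.span_le]
    rintro y ⟨k, hk, rfl⟩
    rw [SetLike.mem_coe, RingHom.mem_ker]
    exact constantCoeff_sPoly M k (by rcases hk with ⟨h1, _⟩; omega)
  exact hle hx

noncomputable def epsR (M a b : ℕ) (ha : 1 ≤ a) : RK M a b →+* ℤ :=
  Ideal.Quotient.lift _ MvPolynomial.constantCoeff (spanKer M a b ha)

instance : Nontrivial (Rstep m d) := (epsR (m+1) (d+1) (d+m+1) (by omega)).domain_nontrivial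
instance : Nontrivial (Rstep' m d) := (epsR m (d+2) (d+m+1) (by omega)).domain_nontrivial

noncomputable def gPoly : Polynomial (Rstep m d) :=
  ∑ i ∈ Finset.range (m+2),
    Polynomial.C (mkA m d ((-1)^i * xpoly (m+1) i)) * Polynomial.X ^ (m+1-i)

noncomputable def g'Poly : Polynomial (Rstep' m d) :=
  ∑ j ∈ Finset.range (d+2),
    Polynomial.C (mkA' m d ((-1)^j * sPoly m j)) * Polynomial.X ^ (d+1-j)

lemma gPoly_aux : (gPoly m d).Monic ∧ (gPoly m d).natDegree = m+1 :=
  monic_aux _ (by rw [pow_zero, xpoly_zero, one_mul, map_one]) (m+1) (by omega)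

lemma g'Poly_aux : (g'Poly m d).Monic ∧ (g'Poly m d).natDegree = d+1 :=
  monic_aux _ (by rw [pow_zero, sPoly_zero, one_mul, map_one]) (d+1) (by omega)

abbrev Dst := AdjoinRoot (gPoly m d)
abbrev Dst' := AdjoinRoot (g'Poly m d)

noncomputable def uR : Dst m d := AdjoinRoot.root _
noncomputable def vR : Dst' m d := AdjoinRoot.root _
noncomputable def iA : MvPolynomial (Fin (m+1)) ℤ →+* Dst m d :=
  (AdjoinRoot.of _).comp (mkA m d)
noncomputable def iA' : MvPolynomial (Fin m) ℤ →+* Dst' m d :=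
  (AdjoinRoot.of _).comp (mkA' m d)
noncomputable def xD : ℕ → Dst m d := fun t => iA m d (xpoly (m+1) t)
noncomputable def xD' : ℕ → Dst' m d := fun t => iA' m d (xpoly m t)
noncomputable def sD : ℕ → Dst m d := fun k => iA m d (sPoly (m+1) k)
noncomputable def sD' : ℕ → Dst' m d := fun k => iA' m d (sPoly m k)

lemma xD_zero : xD m d 0 = 1 := by rw [xD, xpoly_zero, map_one]
lemma xD'_zero : xD' m d 0 = 1 := by rw [xD', xpoly_zero, map_one]
lemma xD_gt (t : ℕ) (h : m+1 < t) : xD m d t = 0 := by rw [xD, xpoly_of_gt _ _ h, map_zero]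
lemma xD'_gt (t : ℕ) (h : m < t) : xD' m d t = 0 := by rw [xD', xpoly_of_gt _ _ h, map_zero]

lemma sD_eq_zero (k : ℕ) (h1 : d+1 ≤ k) (h2 : k ≤ d+m+1) : sD m d k = 0 := by
  rw [sD, iA, RingHom.comp_apply, mkA_sPoly m d k h1 h2, map_zero]
lemma sD'_eq_zero (k : ℕ) (h1 : d+2 ≤ k) (h2 : k ≤ d+m+1) : sD' m d k = 0 := by
  rw [sD', iA', RingHom.comp_apply, mkA'_sPoly m d k h1 h2, map_zero]

/-! ### the map `F : Dst → Dst'` -/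

noncomputable def qGen : Fin (m+1) → Dst' m d := fun i => xD' m d (i+1) + vR m d * xD' m d i

noncomputable def phi0 : MvPolynomial (Fin (m+1)) ℤ →+* Dst' m d :=
  (MvPolynomial.aeval (qGen m d)).toRingHom

noncomputable def QD' : ℕ → Dst' m d :=
  fun t => if t = 0 then 1 else xD' m d t + vR m d * xD' m d (t-1)

lemma phi0_xpoly (t : ℕ) : phi0 m d (xpoly (m+1) t) = QD' m d t := by
  rcases Nat.eq_zero_or_pos t with rfl | ht
  · rw [xpoly_zero, map_one, QD', if_pos rfl]
  · rw [QD', if_neg (by omega)]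
    by_cases h : t ≤ m+1
    · rw [xpoly_of_le _ _ (by omega) h]
      show (MvPolynomial.aeval (qGen m d)) (MvPolynomial.X _) = _
      rw [MvPolynomial.aeval_X, qGen]
      show xD' m d ((t-1)+1) + vR m d * xD' m d (t-1) = _
      rw [Nat.sub_add_cancel ht]
    · rw [xpoly_of_gt _ _ (by omega), map_zero,
        xD'_gt _ _ _ (by omega), xD'_gt _ _ _ (by omega), mul_zero, add_zero]

lemma map_phi0_gen :
    PowerSeries.map (phi0 m d) (genSeries (m+1))
      = (1 + PowerSeries.C (vR m d) * PowerSeries.X)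
          * PowerSeries.map (iA' m d) (genSeries m) := by
  ext k
  rcases k with _ | k
  · rw [coeff_map_genSeries, phi0_xpoly, coeff_zero_one_add_CX_mul, coeff_map_genSeries,
      QD', if_pos rfl, xpoly_zero, map_one]
  · rw [coeff_map_genSeries, phi0_xpoly, coeff_succ_one_add_CX_mul, coeff_map_genSeries,
      coeff_map_genSeries, QD', if_neg (by omega), Nat.add_sub_cancel]
    rfl

/-- `phi0` of `sPoly (m+1) k` -/
lemma phi0_sPoly (k : ℕ) :
    phi0 m d (sPoly (m+1) k)
      = ∑ j ∈ Finset.range (k+1), (-(vR m d))^j * sD' m d (k-j) := by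
  have hW : PowerSeries.map (phi0 m d) (PowerSeries.invOfUnit (genSeries (m+1)) 1)
      = (PowerSeries.mk fun j => (-(vR m d))^j)
          * PowerSeries.map (iA' m d) (PowerSeries.invOfUnit (genSeries m) 1) := by
    apply left_inv_eq_right_inv (a := PowerSeries.map (phi0 m d) (genSeries (m+1)))
    · rw [mul_comm]; exact map_gen_mul_map_inv _
    · rw [map_phi0_gen]
      have : ((1 + PowerSeries.C (vR m d) * PowerSeries.X)
            * PowerSeries.map (iA' m d) (genSeries m))
          * ((PowerSeries.mk fun j => (-(vR m d))^j)
            * PowerSeries.map (iA' m d) (PowerSeries.invOfUnit (genSeries m) 1))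
          = (((1 + PowerSeries.C (vR m d) * PowerSeries.X)
              * PowerSeries.mk fun j => (-(vR m d))^j)
            * (PowerSeries.map (iA' m d) (genSeries m)
              * PowerSeries.map (iA' m d) (PowerSeries.invOfUnit (genSeries m) 1))) := by
        ring
      rw [this, geom_inv, map_gen_mul_map_inv, one_mul]
  have : phi0 m d (sPoly (m+1) k)
      = PowerSeries.coeff k (PowerSeries.map (phi0 m d)
          (PowerSeries.invOfUnit (genSeries (m+1)) 1)) := by
    rw [PowerSeries.coeff_map]; rfl
  rw [this, hW, PowerSeries.coeff_mul, Finset.Nat.sum_antidiagonal_eq_sum_range_succ_mk]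
  apply Finset.sum_congr rfl
  intro j hj
  rw [PowerSeries.coeff_mk, PowerSeries.coeff_map]
  rfl

noncomputable def sigD' : ℕ → Dst' m d :=
  fun k => ∑ j ∈ Finset.range (k+1), (-(vR m d))^j * sD' m d (k-j)

lemma phi0_sPoly' (k : ℕ) : phi0 m d (sPoly (m+1) k) = sigD' m d k :=
  phi0_sPoly m d k

lemma sigD'_succ (k : ℕ) :
    sigD' m d (k+1) = sD' m d (k+1) + (-(vR m d)) * sigD' m d k := by
  rw [sigD', Finset.sum_range_succ' (fun j => (-(vR m d))^j * sD' m d (k+1-j)) (k+1)]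
  rw [pow_zero, one_mul, Nat.sub_zero, add_comm]
  congr 1
  rw [sigD', Finset.mul_sum]
  apply Finset.sum_congr rfl
  intro j hj
  have h1 : k + 1 - (j+1) = k - j := by omega
  rw [h1, pow_succ']
  ring

lemma neg_one_pow_sub {S : Type*} [CommRing S] (N j : ℕ) (h : j ≤ N) :
    (-1 : S)^(N-j) = (-1)^N * (-1)^j := by
  have h2 : (-1 : S)^(N-j) * ((-1)^j * (-1)^j) = (-1)^N * (-1)^j := by
    rw [← mul_assoc, ← pow_add, Nat.sub_add_cancel h]
  have h3 : (-1 : S)^j * (-1)^j = 1 := by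
    rw [← mul_pow, neg_mul_neg, one_mul, one_pow]
  rw [← h2, h3, mul_one]

lemma eval_g'_root :
    ∑ j ∈ Finset.range (d+2), (-1 : Dst' m d)^j * sD' m d j * vR m d^(d+1-j) = 0 := by
  have h := AdjoinRoot.eval₂_root (g'Poly m d)
  rw [g'Poly, Polynomial.eval₂_finset_sum] at h
  refine Eq.trans ?_ h
  apply Finset.sum_congr rfl
  intro j _
  rw [Polynomial.eval₂_mul, Polynomial.eval₂_C, Polynomial.eval₂_X_pow]
  show _ = iA' m d ((-1)^j * sPoly m j) * vR m d ^ (d+1-j)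
  rw [map_mul, map_pow, map_neg, map_one]
  rfl

lemma sig_d1 : sigD' m d (d+1) = 0 := by
  have hrefl := Finset.sum_range_reflect
    (fun j => (-(vR m d))^j * sD' m d (d+1-j)) (d+2)
  have h1 : sigD' m d (d+1)
      = ∑ j ∈ Finset.range (d+2), (-(vR m d))^(d+2-1-j) * sD' m d (d+1-(d+2-1-j)) := by
    rw [sigD']
    exact hrefl.symm
  rw [h1]
  have h2 : ∀ j ∈ Finset.range (d+2),
      (-(vR m d))^(d+2-1-j) * sD' m d (d+1-(d+2-1-j))
        = (-1 : Dst' m d)^(d+1) * ((-1)^j * sD' m d j * vR m d^(d+1-j)) := by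
    intro j hj
    rw [Finset.mem_range] at hj
    have e1 : d+2-1-j = d+1-j := by omega
    have e2 : d+1-(d+1-j) = j := by omega
    rw [e1, e2, neg_pow, neg_one_pow_sub (d+1) j (by omega)]
    ring
  rw [Finset.sum_congr rfl h2, ← Finset.mul_sum, eval_g'_root, mul_zero]

lemma sigD'_eq_zero (k : ℕ) (h1 : d+1 ≤ k) (h2 : k ≤ d+m+1) : sigD' m d k = 0 := by
  induction k, h1 using Nat.le_induction with
  | base => exact sig_d1 m d
  | succ k hk ih =>
      rw [sigD'_succ, ih (by omega), mul_zero, add_zero,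
        sD'_eq_zero m d _ (by omega) (by omega)]

lemma phi0_ker :
    ∀ a ∈ Ideal.span (sPoly (m+1) '' Set.Icc (d+1) (d+m+1)), phi0 m d a = 0 := by
  intro a ha
  have hle : Ideal.span (sPoly (m+1) '' Set.Icc (d+1) (d+m+1))
      ≤ RingHom.ker (phi0 m d) := by
    rw [Ideal.span_le]
    rintro y ⟨k, ⟨hk1, hk2⟩, rfl⟩
    rw [SetLike.mem_coe, RingHom.mem_ker, phi0_sPoly']
    exact sigD'_eq_zero m d k hk1 hk2
  exact hle ha

noncomputable def Fc : Rstep m d →+* Dst' m d :=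
  Ideal.Quotient.lift _ (phi0 m d) (phi0_ker m d)

lemma Fc_mkA (a : MvPolynomial (Fin (m+1)) ℤ) : Fc m d (mkA m d a) = phi0 m d a :=
  Ideal.Quotient.lift_mk _ _ _

lemma eval_gPoly_v : (gPoly m d).eval₂ (Fc m d) (vR m d) = 0 := by
  rw [gPoly, Polynomial.eval₂_finset_sum]
  have h1 : ∀ i ∈ Finset.range (m+2),
      Polynomial.eval₂ (Fc m d) (vR m d)
          (Polynomial.C (mkA m d ((-1)^i * xpoly (m+1) i)) * Polynomial.X ^ (m+1-i))
        = (-1 : Dst' m d)^i * QD' m d i * vR m d^(m+1-i) := by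
    intro i _
    rw [Polynomial.eval₂_mul, Polynomial.eval₂_C, Polynomial.eval₂_X_pow, Fc_mkA,
      map_mul, map_pow, map_neg, map_one, phi0_xpoly]
  rw [Finset.sum_congr rfl h1]
  rw [Finset.sum_range_succ' (fun i => (-1 : Dst' m d)^i * QD' m d i * vR m d^(m+1-i)) (m+1)]
  have h2 : ∀ i ∈ Finset.range (m+1),
      (-1 : Dst' m d)^(i+1) * QD' m d (i+1) * vR m d^(m+1-(i+1))
        = (fun j => (-1 : Dst' m d)^j * xD' m d j * vR m d^(m+1-j)) (i+1)
          - (fun j => (-1 : Dst' m d)^j * xD' m d j * vR m d^(m+1-j)) i := by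
    intro i hi
    rw [Finset.mem_range] at hi
    simp only []
    rw [QD', if_neg (by omega), Nat.add_sub_cancel]
    have e1 : m+1-(i+1) = m-i := by omega
    have e2 : m+1-i = (m-i)+1 := by omega
    rw [e1, e2, pow_succ, pow_succ]
    ring
  rw [Finset.sum_congr rfl h2, Finset.sum_range_sub
    (fun j => (-1 : Dst' m d)^j * xD' m d j * vR m d^(m+1-j)) (m+1)]
  rw [xD'_gt m d (m+1) (by omega), xD'_zero, QD', if_pos rfl]
  simp

noncomputable def FD : Dst m d →+* Dst' m d :=
  AdjoinRoot.lift (Fc m d) (vR m d) (eval_gPoly_v m d)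

lemma FD_iA (a : MvPolynomial (Fin (m+1)) ℤ) : FD m d (iA m d a) = phi0 m d a := by
  rw [iA, RingHom.comp_apply]
  rw [FD, AdjoinRoot.lift_of, Fc_mkA]

lemma FD_u : FD m d (uR m d) = vR m d := AdjoinRoot.lift_root _

/-! ### the map `G : Dst' → Dst` -/

noncomputable def PD : ℕ → Dst m d :=
  fun t => ∑ j ∈ Finset.range (t+1), (-(uR m d))^j * xD m d (t-j)

noncomputable def pGen : Fin m → Dst m d := fun i => PD m d (i+1)

noncomputable def theta0 : MvPolynomial (Fin m) ℤ →+* Dst m d :=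
  (MvPolynomial.aeval (pGen m d)).toRingHom

lemma PD_zero : PD m d 0 = 1 := by
  rw [PD, Finset.sum_range_one, pow_zero, one_mul, Nat.sub_zero, xD_zero]

lemma PD_succ (k : ℕ) :
    PD m d (k+1) = xD m d (k+1) + (-(uR m d)) * PD m d k := by
  rw [PD, Finset.sum_range_succ' (fun j => (-(uR m d))^j * xD m d (k+1-j)) (k+1)]
  rw [pow_zero, one_mul, Nat.sub_zero, add_comm]
  congr 1
  rw [PD, Finset.mul_sum]
  apply Finset.sum_congr rfl
  intro j hj
  have h1 : k + 1 - (j+1) = k - j := by omega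
  rw [h1, pow_succ']
  ring

lemma theta0_xpoly (t : ℕ) (h : t ≤ m) : theta0 m d (xpoly m t) = PD m d t := by
  rcases Nat.eq_zero_or_pos t with rfl | ht
  · rw [xpoly_zero, map_one, PD_zero]
  · rw [xpoly_of_le _ _ (by omega) h]
    show (MvPolynomial.aeval (pGen m d)) (MvPolynomial.X _) = _
    rw [MvPolynomial.aeval_X, pGen]
    show PD m d ((t-1)+1) = _
    rw [Nat.sub_add_cancel ht]

lemma eval_g_root :
    ∑ i ∈ Finset.range (m+2), (-1 : Dst m d)^i * xD m d i * uR m d^(m+1-i) = 0 := by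
  have h := AdjoinRoot.eval₂_root (gPoly m d)
  rw [gPoly, Polynomial.eval₂_finset_sum] at h
  refine Eq.trans ?_ h
  apply Finset.sum_congr rfl
  intro i _
  rw [Polynomial.eval₂_mul, Polynomial.eval₂_C, Polynomial.eval₂_X_pow]
  show _ = iA m d ((-1)^i * xpoly (m+1) i) * uR m d ^ (m+1-i)
  rw [map_mul, map_pow, map_neg, map_one]
  rfl

lemma PD_top : PD m d (m+1) = 0 := by
  have hrefl := Finset.sum_range_reflect
    (fun j => (-(uR m d))^j * xD m d (m+1-j)) (m+2)
  have h1 : PD m d (m+1)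
      = ∑ j ∈ Finset.range (m+2), (-(uR m d))^(m+2-1-j) * xD m d (m+1-(m+2-1-j)) := by
    rw [PD]
    exact hrefl.symm
  rw [h1]
  have h2 : ∀ j ∈ Finset.range (m+2),
      (-(uR m d))^(m+2-1-j) * xD m d (m+1-(m+2-1-j))
        = (-1 : Dst m d)^(m+1) * ((-1)^j * xD m d j * uR m d^(m+1-j)) := by
    intro j hj
    rw [Finset.mem_range] at hj
    have e1 : m+2-1-j = m+1-j := by omega
    have e2 : m+1-(m+1-j) = j := by omega
    rw [e1, e2, neg_pow, neg_one_pow_sub (m+1) j (by omega)]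
    ring
  rw [Finset.sum_congr rfl h2, ← Finset.mul_sum, eval_g_root, mul_zero]

lemma theta_id (k : ℕ) (hk : 1 ≤ k) :
    theta0 m d (xpoly m k) + uR m d * theta0 m d (xpoly m (k-1)) = xD m d k := by
  by_cases h : k ≤ m
  · rw [theta0_xpoly m d k h, theta0_xpoly m d (k-1) (by omega)]
    have h1 : PD m d k = xD m d k + (-(uR m d)) * PD m d (k-1) := by
      have := PD_succ m d (k-1)
      rwa [Nat.sub_add_cancel hk] at this
    rw [h1]
    ring
  · by_cases h2 : k = m+1
    · subst h2
      rw [xpoly_of_gt _ _ (by omega), map_zero, zero_add, Nat.add_sub_cancel,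
        theta0_xpoly m d m (by omega)]
      have h3 := PD_top m d
      rw [PD_succ m d m] at h3
      have h4 : uR m d * PD m d m = xD m d (m+1) := by linear_combination -h3
      rw [h4]
    · rw [xpoly_of_gt _ _ (by omega), xpoly_of_gt _ _ (by omega), map_zero,
        mul_zero, add_zero, xD_gt m d k (by omega)]

lemma map_theta0_gen :
    (1 + PowerSeries.C (uR m d) * PowerSeries.X)
        * PowerSeries.map (theta0 m d) (genSeries m)
      = PowerSeries.map (iA m d) (genSeries (m+1)) := by
  ext k
  rcases k with _ | k
  · rw [coeff_zero_one_add_CX_mul, coeff_map_genSeries, coeff_map_genSeries,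
      xpoly_zero, xpoly_zero, map_one, map_one]
  · rw [coeff_succ_one_add_CX_mul, coeff_map_genSeries, coeff_map_genSeries,
      coeff_map_genSeries]
    have := theta_id m d (k+1) (by omega)
    rw [Nat.add_sub_cancel] at this
    rw [this]
    rfl

lemma theta0_sPoly (k : ℕ) :
    theta0 m d (sPoly m (k+1)) = sD m d (k+1) + uR m d * sD m d k := by
  have hW : PowerSeries.map (theta0 m d) (PowerSeries.invOfUnit (genSeries m) 1)
      = (1 + PowerSeries.C (uR m d) * PowerSeries.X)
          * PowerSeries.map (iA m d) (PowerSeries.invOfUnit (genSeries (m+1)) 1) := by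
    apply left_inv_eq_right_inv (a := PowerSeries.map (theta0 m d) (genSeries m))
    · rw [mul_comm]; exact map_gen_mul_map_inv _
    · have hre : PowerSeries.map (theta0 m d) (genSeries m)
          * ((1 + PowerSeries.C (uR m d) * PowerSeries.X)
            * PowerSeries.map (iA m d) (PowerSeries.invOfUnit (genSeries (m+1)) 1))
          = ((1 + PowerSeries.C (uR m d) * PowerSeries.X)
              * PowerSeries.map (theta0 m d) (genSeries m))
            * PowerSeries.map (iA m d) (PowerSeries.invOfUnit (genSeries (m+1)) 1) := by
        ring
      rw [hre, map_theta0_gen, map_gen_mul_map_inv]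
  have h1 : theta0 m d (sPoly m (k+1))
      = PowerSeries.coeff (k+1) (PowerSeries.map (theta0 m d)
          (PowerSeries.invOfUnit (genSeries m) 1)) := by
    rw [PowerSeries.coeff_map]; rfl
  rw [h1, hW, coeff_succ_one_add_CX_mul, PowerSeries.coeff_map, PowerSeries.coeff_map]
  rfl

lemma theta0_ker :
    ∀ a ∈ Ideal.span (sPoly m '' Set.Icc (d+2) (d+m+1)), theta0 m d a = 0 := by
  intro a ha
  have hle : Ideal.span (sPoly m '' Set.Icc (d+2) (d+m+1))
      ≤ RingHom.ker (theta0 m d) := by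
    rw [Ideal.span_le]
    rintro y ⟨k, ⟨hk1, hk2⟩, rfl⟩
    rw [SetLike.mem_coe, RingHom.mem_ker]
    obtain ⟨j, rfl⟩ : ∃ j, k = j + 1 := ⟨k-1, by omega⟩
    rw [theta0_sPoly, sD_eq_zero m d _ (by omega) (by omega),
      sD_eq_zero m d _ (by omega) (by omega), mul_zero, add_zero]
  exact hle ha

noncomputable def Gc : Rstep' m d →+* Dst m d :=
  Ideal.Quotient.lift _ (theta0 m d) (theta0_ker m d)

lemma Gc_mkA' (a : MvPolynomial (Fin m) ℤ) : Gc m d (mkA' m d a) = theta0 m d a :=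
  Ideal.Quotient.lift_mk _ _ _

lemma sD_zero : sD m d 0 = 1 := by rw [sD, sPoly_zero, map_one]

lemma eval_g'Poly_u : (g'Poly m d).eval₂ (Gc m d) (uR m d) = 0 := by
  rw [g'Poly, Polynomial.eval₂_finset_sum]
  have h1 : ∀ j ∈ Finset.range (d+2),
      Polynomial.eval₂ (Gc m d) (uR m d)
          (Polynomial.C (mkA' m d ((-1)^j * sPoly m j)) * Polynomial.X ^ (d+1-j))
        = (-1 : Dst m d)^j * theta0 m d (sPoly m j) * uR m d^(d+1-j) := by
    intro j _
    rw [Polynomial.eval₂_mul, Polynomial.eval₂_C, Polynomial.eval₂_X_pow, Gc_mkA',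
      map_mul, map_pow, map_neg, map_one]
  rw [Finset.sum_congr rfl h1]
  rw [Finset.sum_range_succ' (fun j => (-1 : Dst m d)^j * theta0 m d (sPoly m j)
    * uR m d^(d+1-j)) (d+1)]
  have h2 : ∀ j ∈ Finset.range (d+1),
      (-1 : Dst m d)^(j+1) * theta0 m d (sPoly m (j+1)) * uR m d^(d+1-(j+1))
        = (fun i => (-1 : Dst m d)^i * sD m d i * uR m d^(d+1-i)) (j+1)
          - (fun i => (-1 : Dst m d)^i * sD m d i * uR m d^(d+1-i)) j := by
    intro j hj
    rw [Finset.mem_range] at hj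
    simp only []
    rw [theta0_sPoly]
    have e1 : d+1-(j+1) = d-j := by omega
    have e2 : d+1-j = (d-j)+1 := by omega
    rw [e1, e2, pow_succ, pow_succ]
    ring
  rw [Finset.sum_congr rfl h2, Finset.sum_range_sub
    (fun i => (-1 : Dst m d)^i * sD m d i * uR m d^(d+1-i)) (d+1)]
  rw [sD_eq_zero m d (d+1) (by omega) (by omega), sD_zero, pow_zero, sPoly_zero, map_one]
  simp

noncomputable def GD : Dst' m d →+* Dst m d :=
  AdjoinRoot.lift (Gc m d) (uR m d) (eval_g'Poly_u m d)

lemma GD_iA' (a : MvPolynomial (Fin m) ℤ) : GD m d (iA' m d a) = theta0 m d a := by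
  rw [iA', RingHom.comp_apply, GD, AdjoinRoot.lift_of, Gc_mkA']

lemma GD_v : GD m d (vR m d) = uR m d := AdjoinRoot.lift_root _

/-! ### the two maps are mutually inverse -/

lemma hom_ext_D {S : Type*} [CommRing S] (H1 H2 : Dst m d →+* S)
    (hx : ∀ i : Fin (m+1), H1 (iA m d (MvPolynomial.X i)) = H2 (iA m d (MvPolynomial.X i)))
    (hu : H1 (uR m d) = H2 (uR m d)) : H1 = H2 := by
  have hsurj : Function.Surjective
      ((AdjoinRoot.mk (gPoly m d)).comp
        (Polynomial.mapRingHom (mkA m d))) :=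
    AdjoinRoot.mk_surjective.comp (Polynomial.map_surjective _ Ideal.Quotient.mk_surjective)
  have hcomp : H1.comp ((AdjoinRoot.mk (gPoly m d)).comp (Polynomial.mapRingHom (mkA m d)))
      = H2.comp ((AdjoinRoot.mk (gPoly m d)).comp (Polynomial.mapRingHom (mkA m d))) := by
    apply Polynomial.ringHom_ext
    · intro a
      have hC : ((AdjoinRoot.mk (gPoly m d)).comp (Polynomial.mapRingHom (mkA m d)))
          (Polynomial.C a) = iA m d a := by
        rw [RingHom.comp_apply, Polynomial.coe_mapRingHom, Polynomial.map_C, AdjoinRoot.mk_C]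
        rfl
      simp only [RingHom.comp_apply]
      rw [show (Polynomial.mapRingHom (mkA m d)) (Polynomial.C a) = Polynomial.C (mkA m d a) by
        rw [Polynomial.coe_mapRingHom, Polynomial.map_C], AdjoinRoot.mk_C]
      show H1 (iA m d a) = H2 (iA m d a)
      have : H1.comp (iA m d) = H2.comp (iA m d) := by
        apply MvPolynomial.ringHom_ext
        · intro r
          have : (MvPolynomial.C r : MvPolynomial (Fin (m+1)) ℤ) = (r : MvPolynomial (Fin (m+1)) ℤ) :=
            eq_intCast (MvPolynomial.C : ℤ →+* MvPolynomial (Fin (m+1)) ℤ) r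
          simp only [RingHom.comp_apply, this, map_intCast]
        · intro i
          exact hx i
      exact RingHom.congr_fun this a
    · simp only [RingHom.comp_apply]
      rw [show (Polynomial.mapRingHom (mkA m d)) Polynomial.X = Polynomial.X by
        rw [Polynomial.coe_mapRingHom, Polynomial.map_X], AdjoinRoot.mk_X]
      exact hu
  apply RingHom.ext
  intro x
  obtain ⟨y, rfl⟩ := hsurj x
  exact RingHom.congr_fun hcomp y

lemma hom_ext_D' {S : Type*} [CommRing S] (H1 H2 : Dst' m d →+* S)
    (hx : ∀ i : Fin m, H1 (iA' m d (MvPolynomial.X i)) = H2 (iA' m d (MvPolynomial.X i)))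
    (hv : H1 (vR m d) = H2 (vR m d)) : H1 = H2 := by
  have hsurj : Function.Surjective
      ((AdjoinRoot.mk (g'Poly m d)).comp
        (Polynomial.mapRingHom (mkA' m d))) :=
    AdjoinRoot.mk_surjective.comp (Polynomial.map_surjective _ Ideal.Quotient.mk_surjective)
  have hcomp : H1.comp ((AdjoinRoot.mk (g'Poly m d)).comp (Polynomial.mapRingHom (mkA' m d)))
      = H2.comp ((AdjoinRoot.mk (g'Poly m d)).comp (Polynomial.mapRingHom (mkA' m d))) := by
    apply Polynomial.ringHom_ext
    · intro a
      simp only [RingHom.comp_apply]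
      rw [show (Polynomial.mapRingHom (mkA' m d)) (Polynomial.C a) = Polynomial.C (mkA' m d a) by
        rw [Polynomial.coe_mapRingHom, Polynomial.map_C], AdjoinRoot.mk_C]
      show H1 (iA' m d a) = H2 (iA' m d a)
      have : H1.comp (iA' m d) = H2.comp (iA' m d) := by
        apply MvPolynomial.ringHom_ext
        · intro r
          have : (MvPolynomial.C r : MvPolynomial (Fin m) ℤ) = (r : MvPolynomial (Fin m) ℤ) :=
            eq_intCast (MvPolynomial.C : ℤ →+* MvPolynomial (Fin m) ℤ) r
          simp only [RingHom.comp_apply, this, map_intCast]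
        · intro i
          exact hx i
      exact RingHom.congr_fun this a
    · simp only [RingHom.comp_apply]
      rw [show (Polynomial.mapRingHom (mkA' m d)) Polynomial.X = Polynomial.X by
        rw [Polynomial.coe_mapRingHom, Polynomial.map_X], AdjoinRoot.mk_X]
      exact hv
  apply RingHom.ext
  intro x
  obtain ⟨y, rfl⟩ := hsurj x
  exact RingHom.congr_fun hcomp y

lemma phi0_X (i : Fin (m+1)) :
    phi0 m d (MvPolynomial.X i) = xD' m d (i+1) + vR m d * xD' m d i := by
  show (MvPolynomial.aeval (qGen m d)) (MvPolynomial.X i) = _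
  rw [MvPolynomial.aeval_X, qGen]

lemma GF_id : (GD m d).comp (FD m d) = RingHom.id (Dst m d) := by
  apply hom_ext_D
  · intro i
    rw [RingHom.comp_apply, FD_iA, phi0_X, map_add, map_mul, GD_v]
    rw [show xD' m d (i+1) = iA' m d (xpoly m (i+1)) from rfl,
      show xD' m d i = iA' m d (xpoly m i) from rfl, GD_iA', GD_iA']
    have := theta_id m d (i+1) (by omega)
    rw [Nat.add_sub_cancel] at this
    rw [this, RingHom.id_apply]
    rw [show (iA m d) (MvPolynomial.X i) = xD m d (i+1) by
      rw [xD, xpoly_of_le (m+1) (i+1) (by omega) (Nat.succ_le_of_lt i.isLt)]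
      congr 2]
  · rw [RingHom.comp_apply, FD_u, GD_v, RingHom.id_apply]

lemma FD_PD (t : ℕ) :
    FD m d (PD m d t) = ∑ j ∈ Finset.range (t+1), (-(vR m d))^j * QD' m d (t-j) := by
  rw [PD, map_sum]
  apply Finset.sum_congr rfl
  intro j _
  rw [map_mul, map_pow, map_neg, FD_u]
  rw [show xD m d (t-j) = iA m d (xpoly (m+1) (t-j)) from rfl, FD_iA, phi0_xpoly]

lemma sumQ (t : ℕ) :
    ∑ j ∈ Finset.range (t+1), (-(vR m d))^j * QD' m d (t-j) = xD' m d t := by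
  induction t with
  | zero =>
      rw [Finset.sum_range_one, pow_zero, one_mul, Nat.sub_zero, QD', if_pos rfl, xD'_zero]
  | succ t ih =>
      rw [Finset.sum_range_succ' (fun j => (-(vR m d))^j * QD' m d (t+1-j)) (t+1)]
      rw [pow_zero, one_mul, Nat.sub_zero]
      have hstep : ∑ j ∈ Finset.range (t+1), (-(vR m d))^(j+1) * QD' m d (t+1-(j+1))
          = (-(vR m d)) * xD' m d t := by
        rw [← ih, Finset.mul_sum]
        apply Finset.sum_congr rfl
        intro j hj
        have h1 : t + 1 - (j+1) = t - j := by omega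
        rw [h1, pow_succ']
        ring
      rw [hstep, QD', if_neg (by omega), Nat.add_sub_cancel]
      ring

lemma FG_id : (FD m d).comp (GD m d) = RingHom.id (Dst' m d) := by
  apply hom_ext_D'
  · intro i
    rw [RingHom.comp_apply, GD_iA']
    rw [show (theta0 m d) (MvPolynomial.X i)
        = PD m d (i+1) by
      show (MvPolynomial.aeval (pGen m d)) (MvPolynomial.X i) = _
      rw [MvPolynomial.aeval_X, pGen]]
    rw [FD_PD, sumQ, RingHom.id_apply]
    rw [show iA' m d (MvPolynomial.X i) = xD' m d (i+1) by
      rw [xD', xpoly_of_le m (i+1) (by omega) (Nat.succ_le_of_lt i.isLt)]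
      congr 2]
  · rw [RingHom.comp_apply, GD_v, FD_u, RingHom.id_apply]

noncomputable def equivD : Dst m d ≃+* Dst' m d :=
  RingEquiv.ofRingHom (FD m d) (GD m d) (FG_id m d) (GF_id m d)

/-! ### Assembling the induction step -/

set_option maxHeartbeats 1000000 in
set_option synthInstance.maxHeartbeats 1000000 in
theorem step_basis (b' : Module.Basis (Fin ((d+m+1).choose (d+1))) ℤ (Rstep' m d)) :
    Nonempty (Module.Basis (Fin ((d+m+1).choose d)) ℤ (Rstep m d)) := by
  classical
  let pb : PowerBasis (Rstep m d) (Dst m d) := AdjoinRoot.powerBasis' (gPoly_aux m d).1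
  let pb' : PowerBasis (Rstep' m d) (Dst' m d) := AdjoinRoot.powerBasis' (g'Poly_aux m d).1
  -- ℤ-basis of Dst'
  let bD' : Module.Basis (Fin ((d+m+1).choose (d+1)) × Fin pb'.dim) ℤ (Dst' m d) :=
    b'.smulTower pb'.basis
  -- transfer along the ring isomorphism
  let eL : Dst m d ≃ₗ[ℤ] Dst' m d := (equivD m d).toAddEquiv.toIntLinearEquiv
  let bD : Module.Basis (Fin ((d+m+1).choose (d+1)) × Fin pb'.dim) ℤ (Dst m d) := bD'.map eL.symm
  -- `Rstep` embeds in `Dst`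
  have hdim : 0 < pb.dim := by
    show 0 < (AdjoinRoot.powerBasis' (gPoly_aux m d).1).dim
    rw [AdjoinRoot.powerBasis'_dim, (gPoly_aux m d).2]
    omega
  have hz : Function.Injective (algebraMap (Rstep m d) (Dst m d)) := by
    have key : ∀ r : Rstep m d, algebraMap (Rstep m d) (Dst m d) r = 0 → r = 0 := by
      intro r hr
      rw [AdjoinRoot.algebraMap_eq] at hr
      have hof : AdjoinRoot.of (gPoly m d) r = AdjoinRoot.mk (gPoly m d) (Polynomial.C r) :=
        (AdjoinRoot.mk_C r).symm
      have h0 : (AdjoinRoot.modByMonicHom (gPoly_aux m d).1)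
          (AdjoinRoot.mk (gPoly m d) (Polynomial.C r)) = 0 := by
        rw [← hof, hr, map_zero]
      rw [AdjoinRoot.modByMonicHom_mk] at h0
      have hself : Polynomial.C r %ₘ (gPoly m d) = Polynomial.C r := by
        apply (Polynomial.modByMonic_eq_self_iff (gPoly_aux m d).1).mpr
        apply lt_of_le_of_lt Polynomial.degree_C_le
        rw [Polynomial.degree_eq_natDegree (gPoly_aux m d).1.ne_zero, (gPoly_aux m d).2]
        exact_mod_cast (by omega : (0:ℕ) < m+1)
      rw [hself] at h0
      exact Polynomial.C_eq_zero.mp h0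
    intro r s hrs
    have : algebraMap (Rstep m d) (Dst m d) (r - s) = 0 := by
      rw [map_sub, hrs, sub_self]
    have := key _ this
    exact sub_eq_zero.mp this
  let L : Rstep m d →ₗ[ℤ] Dst m d :=
    ((algebraMap (Rstep m d) (Dst m d)) : Rstep m d →+* Dst m d).toAddMonoidHom.toIntLinearMap
  have hLinj : Function.Injective L := hz
  obtain ⟨r, bN⟩ := Submodule.basisOfPid bD (LinearMap.range L)
  let eR : Rstep m d ≃ₗ[ℤ] LinearMap.range L := LinearEquiv.ofInjective L hLinj
  let bR : Module.Basis (Fin r) ℤ (Rstep m d) := bN.map eR.symm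
  -- cardinality count
  let bBig : Module.Basis (Fin r × Fin pb.dim) ℤ (Dst m d) := bR.smulTower pb.basis
  have hcard : r * pb.dim = ((d+m+1).choose (d+1)) * pb'.dim := by
    have e := bBig.indexEquiv bD
    have hc := Fintype.card_congr e
    simpa [Fintype.card_prod] using hc
  have hpbdim : pb.dim = m+1 := by
    show (AdjoinRoot.powerBasis' (gPoly_aux m d).1).dim = m+1
    rw [AdjoinRoot.powerBasis'_dim, (gPoly_aux m d).2]
  have hpb'dim : pb'.dim = d+1 := by
    show (AdjoinRoot.powerBasis' (g'Poly_aux m d).1).dim = d+1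
    rw [AdjoinRoot.powerBasis'_dim, (g'Poly_aux m d).2]
  rw [hpbdim, hpb'dim] at hcard
  have harith : (d+m+1).choose (d+1) * (d+1) = (d+m+1).choose d * (m+1) := by
    have h := Nat.choose_succ_right_eq (d+m+1) d
    rwa [show d+m+1-d = m+1 by omega] at h
  have hr : r = (d+m+1).choose d := by
    apply Nat.eq_of_mul_eq_mul_right (show 0 < m+1 by omega)
    rw [hcard, harith]
  exact ⟨bR.reindex (finCongr hr)⟩

end Step

theorem main : ∀ m d : ℕ, Nonempty (Module.Basis (Fin ((d+m).choose d)) ℤ (RK m (d+1) (d+m))) := by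
  intro m
  induction m with
  | zero =>
      intro d
      have hspan : Ideal.span (sPoly 0 '' Set.Icc (d+1) (d+0)) = ⊥ := by
        rw [Set.Icc_eq_empty (by omega), Set.image_empty, Ideal.span_empty]
      let e1 := Submodule.quotEquivOfEqBot _ hspan
      let e2 : RK 0 (d+1) (d+0) ≃+ ℤ :=
        e1.toAddEquiv.trans (MvPolynomial.isEmptyRingEquiv ℤ (Fin 0)).toAddEquiv
      refine ⟨((Module.Basis.singleton (Fin 1) ℤ).map e2.toIntLinearEquiv.symm).reindex
        (finCongr ?_)⟩
      rw [Nat.add_zero, Nat.choose_self]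
  | succ m ih =>
      intro d
      have hb' := ih (d+1)
      rw [show d+1+m = d+m+1 from by omega] at hb'
      obtain ⟨b'⟩ := hb'
      exact step_basis m d b'


end Stmt6Aux

/-- For `0 ≤ d ≤ n`, the ring `R_{n,d} = ℤ[x₁,…,x_{n-d}]/(s_{d+1},…,s_n)` is a
free `ℤ`-module of rank `n choose d`. -/
theorem stmt6 (n d : ℕ) (hd : d ≤ n) :
    Nonempty (Module.Basis (Fin (n.choose d)) ℤ (RK (n - d) (d + 1) n)) := by
  have h := Stmt6Aux.main (n - d) d
  rw [show d + (n - d) = n from by omega] at h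
  exact h
end
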